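/- Let m, k, l be natural numbers with k ≤ 2m, k−m ≤ l and l ≤ min(m,k), and set n := 2m, M := m−l, N := m−k+l. Then the expectation of the explicit Racah-presentation pmf satisfies the finite identity ∑_{x=0}^{m} x·p(x | 2m, m, k, l) = m + 1/2 − (1/2)·∑_{r=0}^{min(M,N)} (−1)^r · 4^{m−r} · C(N, r) · C(M+N−r, N) / C(2(m−r), m−r). -/

import Mathlib

open Finset

/-- Rising factorial `(a)_r = a(a+1)⋯(a+r−1)` in `ℚ`. -/
noncomputable def risingFac (a : ℚ) (r : ℕ) : ℚ := ∏ j ∈ Finset.range r, (a + j)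

/-- The terminating `₄F₃`-hypergeometric (Racah polynomial) sum
`∑_{r=0}^{min(x,M,N)} ((−x)_r (x−n−1)_r (−M)_r (−N)_r)/(r! (−m)_r (m−n)_r (−M−N)_r)`. -/
noncomputable def racahSum (n m M N x : ℕ) : ℚ :=
  ∑ r ∈ Finset.range (min x (min M N) + 1),
    risingFac (-(x : ℚ)) r * risingFac ((x : ℚ) - n - 1) r * risingFac (-(M : ℚ)) r *
        risingFac (-(N : ℚ)) r /
      ((r.factorial : ℚ) * risingFac (-(m : ℚ)) r * risingFac ((m : ℚ) - n) r *
        risingFac (-((M : ℚ) + N)) r)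

/-- The explicit Racah-presentation probability mass function `p(x | n,m,k,l)`,
with `M := m−l` and `N := n−m−k+l` (realized as `n+l-m-k` in `ℕ`). -/
noncomputable def racahPMF (n m k l x : ℕ) : ℚ :=
  ((n - k).choose (m - l) : ℚ) * ((n.choose x : ℚ) / (n.choose m : ℚ)) *
    (((n : ℚ) - 2 * x + 1) / ((n : ℚ) - x + 1)) *
    racahSum n m (m - l) (n + l - m - k) x

section Aux

lemma risingFac_neg_natCast (a r : ℕ) :
    risingFac (-(a:ℚ)) r = (-1)^r * (a.descFactorial r : ℚ) := by
  induction r with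
  | zero => simp [risingFac]
  | succ r ih =>
    rw [risingFac, Finset.prod_range_succ, ← risingFac, ih, Nat.descFactorial_succ]
    rcases le_or_gt r a with h | h
    · have hc : ((a - r : ℕ) : ℚ) = (a:ℚ) - r := by
        push_cast [h]; ring
      rw [Nat.cast_mul, hc]; ring
    · rw [Nat.descFactorial_of_lt h]
      simp

lemma cast_desc (a r : ℕ) (h : r ≤ a) :
    (a.descFactorial r : ℚ) = (a.factorial : ℚ) / ((a - r).factorial : ℚ) := by
  rw [eq_div_iff (by exact_mod_cast (Nat.factorial_ne_zero _)), ← Nat.cast_mul, mul_comm,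
    Nat.factorial_mul_descFactorial h]

lemma desc_ne_zero (a r : ℕ) (h : r ≤ a) : (a.descFactorial r : ℚ) ≠ 0 := by
  rw [Ne, Nat.cast_eq_zero, Nat.descFactorial_eq_zero_iff_lt]
  omega

noncomputable def Ftel (h r y : ℕ) : ℚ :=
  ((y:ℚ)^2 + ((r:ℚ) - 1/2) * y) * ((2*h+1).choose y : ℚ)

lemma Ftel_step (h r y : ℕ) (hy : y ≤ 2*h) :
    Ftel h r (y+1) - Ftel h r y
      = (((y:ℚ)+r) * ((2*h+1:ℚ) - 2*y) + (2*h+1)/2) * ((2*h+1).choose y : ℚ) := by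
  have key : ((2*h+1).choose (y+1) : ℚ) * ((y:ℚ)+1)
      = ((2*h+1).choose y : ℚ) * ((2*h+1:ℚ) - y) := by
    have h1 := Nat.choose_succ_right_eq (2*h+1) y
    have h2 : ((2*h+1 - y : ℕ) : ℚ) = (2*h+1:ℚ) - y := by
      push_cast [show y ≤ 2*h+1 by omega]; ring
    calc ((2*h+1).choose (y+1) : ℚ) * ((y:ℚ)+1)
        = (((2*h+1).choose (y+1) * (y+1) : ℕ) : ℚ) := by push_cast; ring
      _ = (((2*h+1).choose y * (2*h+1 - y) : ℕ) : ℚ) := by rw [h1]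
      _ = _ := by rw [Nat.cast_mul, h2]
  have hy1 : ((y:ℚ)+1) ≠ 0 := by positivity
  have hc : ((2*h+1).choose (y+1) : ℚ)
      = ((2*h+1).choose y : ℚ) * ((2*h+1:ℚ) - y) / ((y:ℚ)+1) := by
    rw [eq_div_iff hy1]; exact key
  rw [Ftel, Ftel, hc]
  push_cast
  field_simp
  ring

lemma ysum (h r : ℕ) :
    ∑ y ∈ range (h+1), ((y:ℚ)+r) * ((2*h+1:ℚ) - 2*y) * ((2*h+1).choose y : ℚ)
      = Ftel h r (h+1) - ((2*h+1:ℚ)/2) * 4^h := by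
  have tel : ∑ y ∈ range (h+1), (Ftel h r (y+1) - Ftel h r y)
      = Ftel h r (h+1) - Ftel h r 0 := Finset.sum_range_sub _ _
  have hsum : ∑ y ∈ range (h+1), ((2*h+1).choose y : ℚ) = 4^h := by
    have := Nat.sum_range_choose_halfway h
    exact_mod_cast congrArg (fun n : ℕ => (n : ℚ)) this
  have step : ∀ y ∈ range (h+1),
      ((y:ℚ)+r) * ((2*h+1:ℚ) - 2*y) * ((2*h+1).choose y : ℚ)
        = (Ftel h r (y+1) - Ftel h r y) - ((2*h+1:ℚ)/2) * ((2*h+1).choose y : ℚ) := by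
    intro y hy
    rw [Ftel_step h r y (by simp at hy; omega)]
    ring
  rw [Finset.sum_congr rfl step, Finset.sum_sub_distrib, tel, ← Finset.mul_sum, hsum]
  have : Ftel h r 0 = 0 := by simp [Ftel]
  rw [this]
  ring

lemma perx (m r x : ℕ) (hrx : r ≤ x) (hxm : x ≤ m) :
    (x:ℚ) * ((2*m).choose x : ℚ) * ((2*m:ℚ) - 2*x + 1) / ((2*m:ℚ) - x + 1)
        * (x.descFactorial r : ℚ) * ((2*m+1-x).descFactorial r : ℚ)
      = ((2*m+1).descFactorial (2*r) : ℚ) / (2*m+1)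
          * ((x:ℚ) * ((2*m+1-2*x : ℕ) : ℚ) * ((2*m+1-2*r).choose (x-r) : ℚ)) := by
  have f0 : ∀ n : ℕ, ((n.factorial : ℚ)) ≠ 0 := fun n => by
    exact_mod_cast (Nat.factorial_ne_zero n)
  rw [Nat.cast_choose ℚ (show x ≤ 2*m by omega),
      Nat.cast_choose ℚ (show x - r ≤ 2*m+1-2*r by omega),
      cast_desc x r hrx, cast_desc (2*m+1-x) r (by omega),
      cast_desc (2*m+1) (2*r) (by omega)]
  have e1 : ((2*m:ℚ) - 2*x + 1) = ((2*m+1-2*x : ℕ) : ℚ) := by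
    push_cast [show 2*x ≤ 2*m+1 by omega]; ring
  have e2 : ((2*m:ℚ) - x + 1) = ((2*m+1-x : ℕ) : ℚ) := by
    push_cast [show x ≤ 2*m+1 by omega]; ring
  have e3 : (2*m+1-x) - r = (2*m-x) + 1 - r := by omega
  have e4 : ((2*m+1-x).factorial : ℚ) = ((2*m+1-x : ℕ):ℚ) * ((2*m - x).factorial : ℚ) := by
    rw [show 2*m+1-x = (2*m-x)+1 by omega, Nat.factorial_succ]
    push_cast; ring
  have e5 : ((2*m+1).factorial : ℚ) = ((2*m+1 : ℕ):ℚ) * ((2*m).factorial : ℚ) := by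
    rw [Nat.factorial_succ]; push_cast; ring
  have e6 : (2*m+1) - 2*r = 2*m+1-2*r := by omega
  have e7 : (2*m+1-2*r) - (x - r) = (2*m-x)+1 - r := by omega
  rw [e1, e2, e3, e4, e5, e6, e7]
  have hne : ((2*m+1-x : ℕ):ℚ) ≠ 0 := by
    have : (0:ℕ) < 2*m+1-x := by omega
    exact_mod_cast this.ne'
  have hne2 : ((2*m+1:ℕ):ℚ) ≠ 0 := by exact_mod_cast (Nat.succ_ne_zero (2*m))
  push_cast at hne2 ⊢
  field_simp

lemma xsum (m r : ℕ) (hrm : r ≤ m) :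
    ∑ x ∈ range (m+1), (x:ℚ) * ((2*m).choose x : ℚ) * ((2*m:ℚ) - 2*x + 1) / ((2*m:ℚ) - x + 1)
        * (x.descFactorial r : ℚ) * ((2*m+1-x).descFactorial r : ℚ)
      = ((2*m+1).descFactorial (2*r) : ℚ) / (2*m+1)
          * (Ftel (m-r) r ((m-r)+1) - ((2*(m-r)+1:ℚ)/2) * 4^(m-r)) := by
  set h := m - r with hh
  set f : ℕ → ℚ := fun x =>
    (x:ℚ) * ((2*m).choose x : ℚ) * ((2*m:ℚ) - 2*x + 1) / ((2*m:ℚ) - x + 1)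
      * (x.descFactorial r : ℚ) * ((2*m+1-x).descFactorial r : ℚ) with hf
  have split : ∑ x ∈ range (m+1), f x = ∑ x ∈ Ico r (m+1), f x := by
    rw [Finset.range_eq_Ico, ← Finset.sum_Ico_consecutive _ (Nat.zero_le r) (by omega)]
    have : ∑ x ∈ Ico 0 r, f x = 0 := by
      apply Finset.sum_eq_zero
      intro x hx
      simp only [Finset.mem_Ico] at hx
      have : x.descFactorial r = 0 := Nat.descFactorial_of_lt hx.2
      simp [hf, this]
    rw [this, zero_add]
  rw [split, Finset.sum_Ico_eq_sum_range]
  have hrange : m + 1 - r = h + 1 := by omega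
  rw [hrange]
  have congrstep : ∀ y ∈ range (h+1), f (r + y)
      = ((2*m+1).descFactorial (2*r) : ℚ) / (2*m+1)
          * (((y:ℚ)+r) * ((2*h+1:ℚ) - 2*y) * ((2*h+1).choose y : ℚ)) := by
    intro y hy
    simp only [Finset.mem_range] at hy
    have hym : r + y ≤ m := by omega
    rw [hf]
    simp only
    rw [perx m r (r+y) (by omega) hym]
    have c1 : ((2*m+1-2*(r+y) : ℕ) : ℚ) = (2*h+1:ℚ) - 2*y := by
      push_cast [show 2*(r+y) ≤ 2*m+1 by omega]
      have : ((h:ℕ):ℚ) = (m:ℚ) - r := by push_cast [hh, hrm]; ring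
      rw [this]; ring
    have c2 : 2*m+1-2*r = 2*h+1 := by omega
    have c3 : r + y - r = y := by omega
    rw [c1, c2, c3]
    push_cast
    ring
  rw [Finset.sum_congr rfl congrstep, ← Finset.mul_sum, ysum h r]
  have hcast : ((h:ℕ):ℚ) = (m:ℚ) - r := by rw [hh]; push_cast [hrm]; ring
  rw [hcast]

noncomputable def S0 (N M q : ℕ) : ℚ :=
  ∑ r ∈ range (N+1), (-1:ℚ)^r * (N.choose r : ℚ) * ((M + N - r).choose q : ℚ)

lemma shift_aux (N : ℕ) (g : ℕ → ℚ) (hN : g (N+1) = 0) :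
    ∑ i ∈ range (N+1), g (i+1) = ∑ i ∈ range (N+1), g i - g 0 := by
  have h1 := Finset.sum_range_succ' g (N+1)
  have h2 := Finset.sum_range_succ g (N+1)
  rw [hN, add_zero] at h2
  rw [h2] at h1
  linarith

lemma S0_rec (N M q : ℕ) : S0 (N+1) M q = S0 N (M+1) q - S0 N M q := by
  rw [S0, S0, S0, Finset.sum_range_succ' _ (N+1)]
  have estep : ∀ i ∈ range (N+1),
      (-1:ℚ)^(i+1) * ((N+1).choose (i+1) : ℚ) * ((M + (N+1) - (i+1)).choose q : ℚ)
      = -((-1:ℚ)^i * (N.choose i : ℚ) * ((M + N - i).choose q : ℚ))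
        + ((-1:ℚ)^(i+1) * (N.choose (i+1) : ℚ) * ((M+1 + N - (i+1)).choose q : ℚ)) := by
    intro i hi
    have h1 : M + (N+1) - (i+1) = M + N - i := by omega
    have h2 : M+1 + N - (i+1) = M + N - i := by omega
    rw [h1, h2, Nat.choose_succ_succ]
    push_cast; ring
  rw [Finset.sum_congr rfl estep, Finset.sum_add_distrib]
  rw [shift_aux N (fun j => (-1:ℚ)^j * (N.choose j : ℚ) * ((M+1 + N - j).choose q : ℚ))
    (by simp [Nat.choose_succ_self])]
  simp only [pow_zero, Nat.choose_zero_right, Nat.cast_one, one_mul, Nat.sub_zero]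
  rw [show M + (N+1) = M+1+N by omega]
  rw [Finset.sum_neg_distrib]
  ring

lemma S0_val (N : ℕ) : ∀ M q, q ≤ N → S0 N M q = if q = N then 1 else 0 := by
  induction N with
  | zero =>
    intro M q hq
    interval_cases q
    simp [S0]
  | succ N ih =>
    intro M q hq
    rcases Nat.lt_or_ge q (N+1) with hlt | hge
    · have hqN : q ≤ N := by omega
      rw [S0_rec, ih (M+1) q hqN, ih M q hqN]
      simp [Nat.ne_of_lt hlt]
    · have hq1 : q = N+1 := by omega
      subst hq1
      simp only [if_pos rfl]
      have haux : ∀ M', S0 (N+1) M' N = 0 := by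
        intro M'
        rw [S0_rec, ih (M'+1) N le_rfl, ih M' N le_rfl]
        ring
      induction M with
      | zero =>
        rw [S0, Finset.sum_range_succ' _ (N+1)]
        have hz : ∀ i ∈ range (N+1),
            (-1:ℚ)^(i+1) * ((N+1).choose (i+1) : ℚ) * ((0 + (N+1) - (i+1)).choose (N+1) : ℚ)
              = 0 := by
          intro i hi
          have : (0 + (N+1) - (i+1)).choose (N+1) = 0 :=
            Nat.choose_eq_zero_of_lt (by omega)
          rw [this]; simp
        rw [Finset.sum_eq_zero hz]
        simp
      | succ M ihM =>
        have pascal : ∀ r ∈ range (N+1+1),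
            (-1:ℚ)^r * ((N+1).choose r : ℚ) * (((M+1) + (N+1) - r).choose (N+1) : ℚ)
            = (-1:ℚ)^r * ((N+1).choose r : ℚ) * ((M + (N+1) - r).choose N : ℚ)
              + (-1:ℚ)^r * ((N+1).choose r : ℚ) * ((M + (N+1) - r).choose (N+1) : ℚ) := by
          intro r hr
          simp only [Finset.mem_range] at hr
          have h1 : (M+1) + (N+1) - r = (M + (N+1) - r) + 1 := by omega
          rw [h1, Nat.choose_succ_succ']
          push_cast; ring
        rw [S0, Finset.sum_congr rfl pascal, Finset.sum_add_distrib]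
        have e1 : ∑ r ∈ range (N+1+1),
            (-1:ℚ)^r * ((N+1).choose r : ℚ) * ((M + (N+1) - r).choose N : ℚ)
            = S0 (N+1) M N := by rw [S0]
        have e2 : ∑ r ∈ range (N+1+1),
            (-1:ℚ)^r * ((N+1).choose r : ℚ) * ((M + (N+1) - r).choose (N+1) : ℚ)
            = S0 (N+1) M (N+1) := by rw [S0]
        rw [e1, e2, haux M, ihM]
        ring

lemma perr (m k l r : ℕ) (hk : k ≤ 2*m) (hkl : k ≤ m+l) (hlm : l ≤ m) (hlk : l ≤ k)
    (hrM : r ≤ m - l) (hrN : r ≤ m + l - k) :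
    ((2*m-k).choose (m-l) : ℚ) / ((2*m).choose m : ℚ)
      * ((-1:ℚ)^r * ((m-l).descFactorial r : ℚ) * ((m+l-k).descFactorial r : ℚ)
          / ((r.factorial : ℚ) * (m.descFactorial r : ℚ) * (m.descFactorial r : ℚ)
              * ((2*m-k).descFactorial r : ℚ)))
      * (((2*m+1).descFactorial (2*r) : ℚ) / (2*(m:ℚ)+1)
          * (Ftel (m-r) r ((m-r)+1) - ((2*((m:ℚ)-r)+1)/2) * 4^(m-r)))
      = (-1:ℚ)^r * ((m+l-k).choose r : ℚ) * ((m-l + (m+l-k) - r).choose (m+l-k) : ℚ)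
          * ((m:ℚ) + 1/2)
        - (1/2) * ((-1:ℚ)^r * 4^(m-r) * ((m+l-k).choose r : ℚ)
            * ((m-l + (m+l-k) - r).choose (m+l-k) : ℚ)
            / ((2*(m-r)).choose (m-r) : ℚ)) := by
  have hrm : r ≤ m := by omega
  set h := m - r with hh
  have f0 : ∀ n : ℕ, ((n.factorial : ℚ)) ≠ 0 := fun n => by
    exact_mod_cast (Nat.factorial_ne_zero n)
  rw [Ftel]
  rw [Nat.cast_choose ℚ (show m - l ≤ 2*m - k by omega),
      Nat.cast_choose ℚ (show m ≤ 2*m by omega),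
      Nat.cast_choose ℚ (show h+1 ≤ 2*h+1 by omega),
      Nat.cast_choose ℚ (show r ≤ m+l-k by omega),
      Nat.cast_choose ℚ (show m+l-k ≤ m-l + (m+l-k) - r by omega),
      Nat.cast_choose ℚ (show m - r ≤ 2*(m-r) by omega),
      cast_desc (m-l) r hrM, cast_desc (m+l-k) r hrN,
      cast_desc m r hrm, cast_desc (2*m-k) r (by omega),
      cast_desc (2*m+1) (2*r) (by omega)]
  rw [show (2*m-k) - (m-l) = m+l-k by omega,
      show 2*m - m = m by omega,
      show (2*h+1) - (h+1) = h by omega,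
      show (m-l + (m+l-k) - r) = 2*m-k-r by omega,
      show (2*m-k-r) - (m+l-k) = (m-l) - r by omega,
      show 2*(m-r) - (m-r) = h by omega,
      show m - r = h from rfl,
      show (2*m+1) - 2*r = 2*h+1 by omega]
  have e1 : ((2*m+1).factorial : ℚ) = (2*(m:ℚ)+1) * ((2*m).factorial : ℚ) := by
    rw [show 2*m+1 = (2*m)+1 from rfl, Nat.factorial_succ]; push_cast; ring
  have e2 : ((2*h+1).factorial : ℚ) = (2*(h:ℚ)+1) * ((2*h).factorial : ℚ) := by
    rw [show 2*h+1 = (2*h)+1 from rfl, Nat.factorial_succ]; push_cast; ring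
  have e3 : ((h+1).factorial : ℚ) = ((h:ℚ)+1) * (h.factorial : ℚ) := by
    rw [Nat.factorial_succ]; push_cast; ring
  rw [e1, e2, e3]
  have hm : (m:ℚ) = (h:ℚ) + r := by rw [hh]; push_cast [hrm]; ring
  have hc1 : (2*(m:ℚ)+1) ≠ 0 := by positivity
  have hc2 : (2*(h:ℚ)+1) ≠ 0 := by positivity
  have hc3 : ((h:ℚ)+1) ≠ 0 := by positivity
  rw [hm]
  push_cast
  field_simp
  ring

end Aux
theorem expectation_n_eq_two_m (m k l : ℕ) (hk : k ≤ 2 * m) (hkl : k ≤ m + l)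
    (hlm : l ≤ m) (hlk : l ≤ k) :
    ∑ x ∈ Finset.range (m + 1), (x : ℚ) * racahPMF (2 * m) m k l x
      = (m : ℚ) + 1 / 2 - (1 / 2) *
          ∑ r ∈ Finset.range (min (m - l) (m + l - k) + 1),
            (-1 : ℚ) ^ r * 4 ^ (m - r) * ((m + l - k).choose r : ℚ) *
                ((m - l + (m + l - k) - r).choose (m + l - k) : ℚ) /
              ((2 * (m - r)).choose (m - r) : ℚ) := by
  set K := min (m - l) (m + l - k) with hK
  set T : ℕ → ℕ → ℚ := fun x r =>
    ((2*m-k).choose (m-l) : ℚ) / ((2*m).choose m : ℚ)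
      * ((-1:ℚ)^r * ((m-l).descFactorial r : ℚ) * ((m+l-k).descFactorial r : ℚ)
          / ((r.factorial : ℚ) * (m.descFactorial r : ℚ) * (m.descFactorial r : ℚ)
              * ((2*m-k).descFactorial r : ℚ)))
      * ((x:ℚ) * ((2*m).choose x : ℚ) * ((2*m:ℚ) - 2*x + 1) / ((2*m:ℚ) - x + 1)
          * (x.descFactorial r : ℚ) * ((2*m+1-x).descFactorial r : ℚ)) with hT
  have stepA : ∀ x ∈ Finset.range (m+1),
      (x : ℚ) * racahPMF (2*m) m k l x = ∑ r ∈ Finset.range (K+1), T x r := by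
    intro x hx
    simp only [Finset.mem_range] at hx
    have hxm : x ≤ m := by omega
    rw [racahPMF, show 2*m + l - m - k = m+l-k by omega, racahSum]
    have harg1 : ((x:ℚ) - ((2*m : ℕ):ℚ) - 1) = -(((2*m+1-x : ℕ):ℚ)) := by
      push_cast [show x ≤ 2*m+1 by omega]; ring
    have harg2 : ((m:ℚ) - ((2*m : ℕ):ℚ)) = -((m:ℚ)) := by push_cast; ring
    have harg3 : (-(((m-l : ℕ):ℚ) + ((m+l-k : ℕ):ℚ))) = -(((2*m-k : ℕ):ℚ)) := by
      push_cast [hlm, hkl, hk]; ring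
    rw [harg1, harg2, harg3]
    have hsub : Finset.range (min x (min (m-l) (m+l-k)) + 1) ⊆ Finset.range (K+1) := by
      apply Finset.range_subset_range.mpr
      omega
    rw [Finset.mul_sum, Finset.mul_sum]
    rw [← Finset.sum_subset hsub ?vanish]
    case vanish =>
      intro r hr hnr
      simp only [Finset.mem_range] at hr hnr
      have hxr : x < r := by omega
      have : x.descFactorial r = 0 := Nat.descFactorial_of_lt hxr
      simp [hT, this]
    apply Finset.sum_congr rfl
    intro r hr
    simp only [Finset.mem_range] at hr
    have hrx : r ≤ x := by omega
    have hrM : r ≤ m - l := by omega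
    have hrN : r ≤ m + l - k := by omega
    have hrm : r ≤ m := by omega
    rw [risingFac_neg_natCast x r, risingFac_neg_natCast (2*m+1-x) r,
        risingFac_neg_natCast (m-l) r, risingFac_neg_natCast (m+l-k) r]
    have hm' : risingFac (-(m:ℚ)) r = (-1)^r * (m.descFactorial r : ℚ) :=
      risingFac_neg_natCast m r
    rw [hm', risingFac_neg_natCast (2*m-k) r, hT]
    simp only
    have d1 : ((r.factorial : ℚ)) ≠ 0 := by exact_mod_cast r.factorial_ne_zero
    have d2 : (m.descFactorial r : ℚ) ≠ 0 := desc_ne_zero m r hrm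
    have d3 : ((2*m-k).descFactorial r : ℚ) ≠ 0 := desc_ne_zero _ r (by omega)
    have d4 : ((-1:ℚ)^r) ≠ 0 := by
      apply pow_ne_zero; norm_num
    have d5 : (((2*m).choose m : ℚ)) ≠ 0 := by
      have := Nat.choose_pos (show m ≤ 2*m by omega)
      exact_mod_cast this.ne'
    have d6 : ((2*m : ℕ):ℚ) - x + 1 ≠ 0 := by
      have : ((2*m : ℕ):ℚ) - x + 1 = ((2*m+1-x : ℕ):ℚ) := by
        push_cast [show x ≤ 2*m+1 by omega]; ring
      rw [this]
      have : (0:ℕ) < 2*m+1-x := by omega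
      exact_mod_cast this.ne'
    push_cast at d6 ⊢
    field_simp
  rw [Finset.sum_congr rfl stepA, Finset.sum_comm]
  have stepC : ∀ r ∈ Finset.range (K+1),
      ∑ x ∈ Finset.range (m+1), T x r
        = (-1:ℚ)^r * ((m+l-k).choose r : ℚ) * ((m-l + (m+l-k) - r).choose (m+l-k) : ℚ)
            * ((m:ℚ) + 1/2)
          - (1/2) * ((-1:ℚ)^r * 4^(m-r) * ((m+l-k).choose r : ℚ)
              * ((m-l + (m+l-k) - r).choose (m+l-k) : ℚ)
              / ((2*(m-r)).choose (m-r) : ℚ)) := by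
    intro r hr
    simp only [Finset.mem_range] at hr
    have hrM : r ≤ m - l := by omega
    have hrN : r ≤ m + l - k := by omega
    have hrm : r ≤ m := by omega
    rw [hT]
    simp only
    rw [← Finset.mul_sum, xsum m r hrm]
    exact perr m k l r hk hkl hlm hlk hrM hrN
  rw [Finset.sum_congr rfl stepC, Finset.sum_sub_distrib]
  have bridge : ∑ r ∈ Finset.range (K+1),
      (-1:ℚ)^r * ((m+l-k).choose r : ℚ) * ((m-l + (m+l-k) - r).choose (m+l-k) : ℚ) = 1 := by
    have hext : ∑ r ∈ Finset.range (K+1),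
        (-1:ℚ)^r * ((m+l-k).choose r : ℚ) * ((m-l + (m+l-k) - r).choose (m+l-k) : ℚ)
        = ∑ r ∈ Finset.range ((m+l-k)+1),
        (-1:ℚ)^r * ((m+l-k).choose r : ℚ) * ((m-l + (m+l-k) - r).choose (m+l-k) : ℚ) := by
      apply Finset.sum_subset (Finset.range_subset_range.mpr (by omega))
      intro r hr hnr
      simp only [Finset.mem_range] at hr hnr
      have hrr : K < r := by omega
      have hM : m - l < r := by omega
      have : (m-l + (m+l-k) - r).choose (m+l-k) = 0 :=
        Nat.choose_eq_zero_of_lt (by omega)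
      rw [this]
      simp
    rw [hext]
    have hs := S0_val (m+l-k) (m-l) (m+l-k) le_rfl
    rw [if_pos rfl, S0] at hs
    exact hs
  have e1 : ∑ r ∈ Finset.range (K+1),
      ((-1:ℚ)^r * ((m+l-k).choose r : ℚ) * ((m-l + (m+l-k) - r).choose (m+l-k) : ℚ)
        * ((m:ℚ) + 1/2))
      = ((m:ℚ) + 1/2) := by
    rw [← Finset.sum_mul, bridge, one_mul]
  rw [e1, ← Finset.mul_sum]
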